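/- (Unconditional cooperation.) Let D ⊂ {1,…,N} be a set of unconditional defectors and let 1_{∖D} ∈ [0,1]^N denote the vector with entries 1 for i ∉ D and 0 for i ∈ D. For each i ∉ D let y_i : [0,1]^N → ℝ be continuous and let g_i : [0,1] → ℝ be continuous with g_i(x) > 0 for all x ∈ [0,1]. Consider the dynamics on K = { p ∈ [0,1]^N : p_i = 0 for all i ∈ D } given by ṗ_i = p_i (1 − p_i) g_i(p_i) y_i(p) for i ∉ D. If y_i(1_{∖D}) > 0 for every i ∉ D, then 1_{∖D} is an asymptotically stable equilibrium relative to K: for every relative neighborhood U of 1_{∖D} in K there is a relative neighborhood V such that every differentiable solution p : [0,∞) → K with p(0) ∈ V remains in U and converges to 1_{∖D} as t → ∞. -/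

import Mathlib

open Filter Topology

set_option maxHeartbeats 1000000

/-- Unconditional cooperation: with a set `D` of unconditional defectors, consider the
dynamics `ṗ i = p i * (1 - p i) * g i (p i) * y i p` for `i ∉ D` on the set
`K = {p ∈ [0,1]^N : p i = 0 for i ∈ D}`, with `y i` continuous and `g i` continuous and
positive on `[0,1]`.  If `y i (1_{∖D}) > 0` for every `i ∉ D`, then the point `1_{∖D}`
(entries `1` off `D`, `0` on `D`) is an asymptotically stable equilibrium relative to `K`. -/
theorem unconditional_cooperation_stable
    (N : ℕ) (D : Finset (Fin N))
    (y : Fin N → (Fin N → ℝ) → ℝ)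
    (hycont : ∀ i ∉ D, ContinuousOn (y i) (Set.Icc (0 : Fin N → ℝ) 1))
    (g : Fin N → ℝ → ℝ)
    (hgcont : ∀ i ∉ D, ContinuousOn (g i) (Set.Icc (0 : ℝ) 1))
    (hgpos : ∀ i ∉ D, ∀ x ∈ Set.Icc (0 : ℝ) 1, 0 < g i x)
    (onesD : Fin N → ℝ) (honesD : onesD = fun i => if i ∈ D then 0 else 1)
    (K : Set (Fin N → ℝ))
    (hK : K = {q : Fin N → ℝ | q ∈ Set.Icc (0 : Fin N → ℝ) 1 ∧ ∀ i ∈ D, q i = 0})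
    (hpos : ∀ i ∉ D, 0 < y i onesD) :
    ∀ U ∈ 𝓝[K] onesD, ∃ V ∈ 𝓝[K] onesD,
      ∀ p : ℝ → Fin N → ℝ,
        (∀ t ∈ Set.Ici (0 : ℝ), p t ∈ K) →
        (∀ i ∉ D, ∀ t ∈ Set.Ici (0 : ℝ),
          HasDerivWithinAt (fun s => p s i)
            (p t i * (1 - p t i) * g i (p t i) * y i (p t)) (Set.Ici 0) t) →
        p 0 ∈ V →
        (∀ t ∈ Set.Ici (0 : ℝ), p t ∈ U) ∧ Tendsto p atTop (𝓝 onesD) := by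
  have honesD01 : onesD ∈ Set.Icc (0 : Fin N → ℝ) 1 := by
    subst honesD
    constructor <;> intro i <;> simp only [Pi.zero_apply, Pi.one_apply] <;> split <;> norm_num
  have honesDval : ∀ i ∉ D, onesD i = 1 := by
    intro i hi; simp [honesD, hi]
  have honesDval0 : ∀ i ∈ D, onesD i = 0 := by
    intro i hi; simp [honesD, hi]
  intro U hU
  rw [Metric.mem_nhdsWithin_iff] at hU
  obtain ⟨ε', hε'pos, hUsub⟩ := hU
  -- radius of positivity of `y i` around `onesD`
  have hδ : ∀ i : Fin N, ∃ d : ℝ, 0 < d ∧ (i ∉ D → ∀ q ∈ Set.Icc (0 : Fin N → ℝ) 1,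
      dist q onesD < d → 0 < y i q) := by
    intro i
    by_cases hi : i ∈ D
    · exact ⟨1, one_pos, fun h => absurd hi h⟩
    · have hc : ContinuousWithinAt (y i) (Set.Icc (0 : Fin N → ℝ) 1) onesD :=
        hycont i hi onesD honesD01
      have hmem : (y i) ⁻¹' Set.Ioi 0 ∈ 𝓝[Set.Icc (0 : Fin N → ℝ) 1] onesD :=
        hc.preimage_mem_nhdsWithin (isOpen_Ioi.mem_nhds (hpos i hi))
      rw [Metric.mem_nhdsWithin_iff] at hmem
      obtain ⟨d, hd, hsub⟩ := hmem
      exact ⟨d, hd, fun _ q hq hqd => hsub ⟨Metric.mem_ball.2 hqd, hq⟩⟩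
  choose δ hδpos hδspec using hδ
  -- choose ε
  set F : Finset ℝ := insert (min (1/2 : ℝ) (ε'/2)) (Finset.image (fun i => δ i / 2) Finset.univ)
    with hF
  have hFne : F.Nonempty := ⟨_, Finset.mem_insert_self _ _⟩
  set ε : ℝ := F.min' hFne with hεdef
  have hεpos : 0 < ε := by
    have := F.min'_mem hFne
    rw [← hεdef] at this
    rcases Finset.mem_insert.1 this with h | h
    · rw [h]; exact lt_min (by norm_num) (by linarith)
    · obtain ⟨i, _, hi⟩ := Finset.mem_image.1 h
      rw [← hi]; linarith [hδpos i]
  have hεhalf : ε ≤ 1/2 :=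
    le_trans (F.min'_le _ (Finset.mem_insert_self _ _)) (min_le_left _ _)
  have hεε' : ε ≤ ε'/2 :=
    le_trans (F.min'_le _ (Finset.mem_insert_self _ _)) (min_le_right _ _)
  have hεδ : ∀ i, ε < δ i := by
    intro i
    have : ε ≤ δ i / 2 := F.min'_le _ (Finset.mem_insert_of_mem
      (Finset.mem_image_of_mem _ (Finset.mem_univ i)))
    linarith [hδpos i]
  -- fact A : near-one points of K are within ε of onesD
  have factA : ∀ q ∈ K, (∀ j ∉ D, 1 - ε ≤ q j) → dist q onesD ≤ ε := by
    intro q hq hqj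
    rw [hK] at hq
    rw [dist_pi_le_iff hεpos.le]
    intro j
    by_cases hj : j ∈ D
    · rw [hq.2 j hj, honesDval0 j hj, dist_self]; exact hεpos.le
    · rw [honesDval j hj, Real.dist_eq, abs_le]
      constructor
      · linarith [hqj j hj]
      · have h1 : q j ≤ 1 := hq.1.2 j
        linarith
  -- fact B : positivity of y near onesD
  have factB : ∀ q ∈ Set.Icc (0 : Fin N → ℝ) 1, dist q onesD ≤ ε → ∀ i ∉ D, 0 < y i q := by
    intro q hq hqd i hi
    exact hδspec i hi q hq (lt_of_le_of_lt hqd (hεδ i))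
  -- define V
  refine ⟨{q | q ∈ K ∧ ∀ i ∉ D, 1 - ε < q i}, ?_, ?_⟩
  · rw [Metric.mem_nhdsWithin_iff]
    refine ⟨ε, hεpos, ?_⟩
    rintro q ⟨hqb, hqK⟩
    refine ⟨hqK, fun i hi => ?_⟩
    have := lt_of_le_of_lt (dist_le_pi_dist q onesD i) (Metric.mem_ball.1 hqb)
    rw [honesDval i hi, Real.dist_eq] at this
    have := abs_lt.1 this
    linarith [this.1]
  intro p hpK hpderiv hp0
  obtain ⟨hp0K, hp0V⟩ := hp0
  -- basic bounds on coordinates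
  have hbound : ∀ t ∈ Set.Ici (0:ℝ), ∀ j, 0 ≤ p t j ∧ p t j ≤ 1 := by
    intro t ht j
    have h := hpK t ht
    rw [hK] at h
    exact ⟨h.1.1 j, h.1.2 j⟩
  -- key invariance claim
  have key : ∀ t ∈ Set.Ici (0:ℝ), ∀ i ∉ D, 1 - ε < p t i := by
    by_contra hcon
    push_neg at hcon
    obtain ⟨t₁, ht₁, i₁, hi₁, hle₁⟩ := hcon
    set Bad : Set ℝ := {t | t ∈ Set.Ici (0:ℝ) ∧ ∃ i, i ∉ D ∧ p t i ≤ 1 - ε} with hBad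
    have hBadne : Bad.Nonempty := ⟨t₁, ht₁, i₁, hi₁, hle₁⟩
    have hBadbdd : BddBelow Bad := ⟨0, fun x hx => hx.1⟩
    have hBadclosed : IsClosed Bad := by
      have : Bad = ⋃ i ∈ {i : Fin N | i ∉ D},
          (Set.Ici (0:ℝ) ∩ (fun s => p s i) ⁻¹' Set.Iic (1 - ε)) := by
        ext t
        simp only [hBad, Set.mem_setOf_eq, Set.mem_iUnion, Set.mem_inter_iff,
          Set.mem_preimage, Set.mem_Iic, Set.mem_Ici]
        tauto
      rw [this]
      refine Set.Finite.isClosed_biUnion (Set.toFinite _) (fun i hi => ?_)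
      refine ContinuousOn.preimage_isClosed_of_isClosed ?_ isClosed_Ici isClosed_Iic
      intro s hs
      exact (hpderiv i hi s hs).continuousWithinAt
    set T : ℝ := sInf Bad with hT
    have hTmem : T ∈ Bad := hBadclosed.csInf_mem hBadne hBadbdd
    obtain ⟨hT0, i₂, hi₂, hTle⟩ := hTmem
    have hTpos : 0 < T := by
      rcases lt_or_eq_of_le (Set.mem_Ici.1 hT0) with h | h
      · exact h
      · exfalso; rw [← h] at hTle; linarith [hp0V i₂ hi₂]
    have hbefore : ∀ s, 0 ≤ s → s < T → ∀ j, j ∉ D → 1 - ε < p s j := by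
      intro s hs0 hsT j hj
      by_contra hle'
      exact absurd (csInf_le hBadbdd ⟨hs0, j, hj, not_lt.1 hle'⟩) (not_le.2 hsT)
    -- at T, all coordinates are still ≥ 1 - ε (limit from the left)
    have hatT : ∀ j ∉ D, 1 - ε ≤ p T j := by
      intro j hj
      have hc : ContinuousWithinAt (fun s => p s j) (Set.Ico 0 T) T :=
        ((hpderiv j hj T hT0).continuousWithinAt).mono Set.Ico_subset_Ici_self
      have hcl : T ∈ closure (Set.Ico (0:ℝ) T) := by
        rw [closure_Ico hTpos.ne]
        exact ⟨hT0, le_refl T⟩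
      haveI : (𝓝[Set.Ico (0:ℝ) T] T).NeBot := mem_closure_iff_nhdsWithin_neBot.1 hcl
      refine ge_of_tendsto hc ?_
      filter_upwards [self_mem_nhdsWithin] with s hs
      exact (hbefore s hs.1 hs.2 j hj).le
    -- p · i₂ is monotone on [0, T]
    have hmono : MonotoneOn (fun s => p s i₂) (Set.Icc 0 T) := by
      apply monotoneOn_of_hasDerivWithinAt_nonneg (convex_Icc 0 T)
        (f' := fun x => p x i₂ * (1 - p x i₂) * g i₂ (p x i₂) * y i₂ (p x))
      · intro s hs
        exact ((hpderiv i₂ hi₂ s hs.1).continuousWithinAt).mono Set.Icc_subset_Ici_self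
      · intro x hx
        rw [interior_Icc] at hx ⊢
        exact (hpderiv i₂ hi₂ x hx.1.le).mono
          (Set.Ioo_subset_Icc_self.trans Set.Icc_subset_Ici_self)
      · intro x hx
        rw [interior_Icc] at hx
        obtain ⟨h0, h1⟩ := hbound x hx.1.le i₂
        have hg := hgpos i₂ hi₂ _ ⟨h0, h1⟩
        have hy : 0 < y i₂ (p x) := by
          apply factB _ ⟨fun j => (hbound x hx.1.le j).1, fun j => (hbound x hx.1.le j).2⟩ _ i₂ hi₂
          exact factA _ (hpK x hx.1.le) (fun j hj => (hbefore x hx.1.le hx.2 j hj).le)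
        have : 0 ≤ p x i₂ * (1 - p x i₂) := mul_nonneg h0 (by linarith)
        positivity
    have h0mem : (0:ℝ) ∈ Set.Icc (0:ℝ) T := ⟨le_refl 0, hTpos.le⟩
    have hTmem' : T ∈ Set.Icc (0:ℝ) T := ⟨hTpos.le, le_refl T⟩
    have := hmono h0mem hTmem' hTpos.le
    have := hp0V i₂ hi₂
    simp only at *
    linarith
  -- distance stays ≤ ε
  have hdistle : ∀ t ∈ Set.Ici (0:ℝ), dist (p t) onesD ≤ ε := by
    intro t ht
    exact factA _ (hpK t ht) (fun j hj => (key t ht j hj).le)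
  -- global monotonicity
  have hmonoAll : ∀ j ∉ D, MonotoneOn (fun s => p s j) (Set.Ici 0) := by
    intro j hj
    apply monotoneOn_of_hasDerivWithinAt_nonneg (convex_Ici 0)
      (f' := fun x => p x j * (1 - p x j) * g j (p x j) * y j (p x))
    · intro s hs
      exact (hpderiv j hj s hs).continuousWithinAt
    · intro x hx
      rw [interior_Ici] at hx ⊢
      exact (hpderiv j hj x (Set.Ioi_subset_Ici_self hx)).mono Set.Ioi_subset_Ici_self
    · intro x hx
      rw [interior_Ici] at hx
      obtain ⟨h0, h1⟩ := hbound x (Set.Ioi_subset_Ici_self hx) j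
      have hg := hgpos j hj _ ⟨h0, h1⟩
      have hy : 0 < y j (p x) := by
        apply factB _ ⟨fun k => (hbound x (Set.Ioi_subset_Ici_self hx) k).1, fun k => (hbound x (Set.Ioi_subset_Ici_self hx) k).2⟩ _ j hj
        exact hdistle x (Set.Ioi_subset_Ici_self hx)
      have : 0 ≤ p x j * (1 - p x j) := mul_nonneg h0 (by linarith)
      positivity
  constructor
  · -- stays in U
    intro t ht
    apply hUsub
    refine ⟨Metric.mem_ball.2 ?_, hpK t ht⟩
    rw [dist_pi_lt_iff hε'pos]
    intro j
    by_cases hj : j ∈ D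
    · rw [hK] at hpK
      rw [(hpK t ht).2 j hj, honesDval0 j hj, dist_self]
      exact hε'pos
    · rw [honesDval j hj, Real.dist_eq, abs_lt]
      obtain ⟨h0, h1⟩ := hbound t ht j
      have := key t ht j hj
      constructor <;> linarith
  · -- convergence
    rw [tendsto_pi_nhds]
    intro j
    by_cases hj : j ∈ D
    · rw [honesDval0 j hj]
      apply Tendsto.congr' (f₁ := fun _ => (0:ℝ))
      · filter_upwards [eventually_ge_atTop (0:ℝ)] with t ht
        rw [hK] at hpK
        exact ((hpK t ht).2 j hj).symm
      · exact tendsto_const_nhds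
    · rw [honesDval j hj]
      rw [tendsto_order]
      constructor
      · intro a ha
        -- find t₀ with a < p t₀ j
        have hex : ∃ t₀, 0 ≤ t₀ ∧ a < p t₀ j := by
          by_contra hcon
          push_neg at hcon
          -- then p t j ≤ a for all t ≥ 0; derive a contradiction via linear growth
          have haε : 1 - ε ≤ a := by
            have := key 0 Set.self_mem_Ici j hj
            have := hcon 0 le_rfl
            linarith
          -- lower bounds for the factors
          obtain ⟨xg, hxg, hxgmin⟩ := (isCompact_Icc (a := (0:ℝ)) (b := 1)).exists_isMinOn
            ⟨0, le_refl 0, zero_le_one⟩ (hgcont j hj)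
          set mg := g j xg with hmg
          have hmgpos : 0 < mg := hgpos j hj xg hxg
          have hScomp : IsCompact (Set.Icc (0 : Fin N → ℝ) 1 ∩ Metric.closedBall onesD ε) :=
            isCompact_Icc.inter_right Metric.isClosed_closedBall
          obtain ⟨xy, hxy, hxymin⟩ := hScomp.exists_isMinOn
            ⟨onesD, honesD01, Metric.mem_closedBall.2 (by rw [dist_self]; exact hεpos.le)⟩
            ((hycont j hj).mono Set.inter_subset_left)
          set my := y j xy with hmy
          have hmypos : 0 < my :=
            factB xy hxy.1 (Metric.mem_closedBall.1 hxy.2) j hj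
          set c : ℝ := (1/2) * (1 - a) * mg * my with hc
          have h1a : 0 < 1 - a := by linarith
          have hcpos : 0 < c := by positivity
          -- derivative lower bound
          have hderivlb : ∀ x ∈ Set.Ici (0:ℝ),
              c ≤ p x j * (1 - p x j) * g j (p x j) * y j (p x) := by
            intro x hx
            obtain ⟨h0, h1⟩ := hbound x hx j
            have hkey := key x hx j hj
            have hpja : p x j ≤ a := hcon x hx
            have hpx12 : (1:ℝ)/2 ≤ p x j := by linarith
            have h1p : 1 - a ≤ 1 - p x j := by linarith
            have hgb : mg ≤ g j (p x j) := hxgmin ⟨h0, h1⟩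
            have hyb : my ≤ y j (p x) := by
              apply hxymin
              exact ⟨⟨fun k => (hbound x hx k).1, fun k => (hbound x hx k).2⟩,
                Metric.mem_closedBall.2 (hdistle x hx)⟩
            have hgb0 : 0 < g j (p x j) := hgpos j hj _ ⟨h0, h1⟩
            have hyb0 : 0 < y j (p x) := lt_of_lt_of_le hmypos hyb
            have step1 : (1/2) * (1 - a) ≤ p x j * (1 - p x j) := by nlinarith
            have step2 : (1/2) * (1 - a) * mg ≤ p x j * (1 - p x j) * g j (p x j) := by nlinarith
            have hnn : 0 ≤ p x j * (1 - p x j) * g j (p x j) :=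
              mul_nonneg (mul_nonneg h0 (by linarith)) hgb0.le
            have step3 := mul_le_mul step2 hyb hmypos.le hnn
            linarith
          -- linear growth: f s = p s j - c * s is monotone on Ici 0
          have hlin : MonotoneOn (fun s => p s j - c * s) (Set.Ici 0) := by
            apply monotoneOn_of_hasDerivWithinAt_nonneg (convex_Ici 0)
              (f' := fun x => p x j * (1 - p x j) * g j (p x j) * y j (p x) - c)
            · intro s hs
              exact ((hpderiv j hj s hs).continuousWithinAt.sub
                ((continuous_const.mul continuous_id).continuousWithinAt))
            · intro x hx
              rw [interior_Ici] at hx ⊢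
              exact ((hpderiv j hj x (Set.Ioi_subset_Ici_self hx)).mono Set.Ioi_subset_Ici_self).sub
                (((hasDerivAt_id x).const_mul c).hasDerivWithinAt.congr_deriv (by ring))
            · intro x hx
              rw [interior_Ici] at hx
              have := hderivlb x (Set.Ioi_subset_Ici_self hx)
              linarith
          -- evaluate at t = 2/c
          have h2c : (0:ℝ) ≤ 2 / c := by positivity
          have := hlin (Set.self_mem_Ici) (Set.mem_Ici.2 h2c) h2c
          simp only [mul_zero, sub_zero] at this
          have hcc : c * (2 / c) = 2 := by field_simp
          obtain ⟨h0, _⟩ := hbound 0 Set.self_mem_Ici j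
          obtain ⟨_, h1'⟩ := hbound (2/c) (Set.mem_Ici.2 h2c) j
          rw [hcc] at this
          linarith
        obtain ⟨t₀, ht₀, hat₀⟩ := hex
        filter_upwards [eventually_ge_atTop t₀] with t ht
        have ht' : 0 ≤ t := le_trans ht₀ ht
        exact lt_of_lt_of_le hat₀ (hmonoAll j hj (Set.mem_Ici.2 ht₀) (Set.mem_Ici.2 ht') ht)
      · intro b hb
        filter_upwards [eventually_ge_atTop (0:ℝ)] with t ht
        exact lt_of_le_of_lt (hbound t ht j).2 hb
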